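/- Extremal solutions of the bidding LP are mostly integral: let P = { x ∈ ℝ^m : 0 ≤ x_j ≤ 1 for all j, and Σ_{j=1}^m p_j x_j ≤ B^c + Σ_{j=1}^m w_j^c x_j for every c ∈ C } be the feasible polytope of the generalized bidding LP, where C is a finite set. Then every extreme point x of P has at most |C| fractional coordinates, i.e., |{ j : 0 < x_j < 1 }| ≤ |C|. -/

import Mathlib

open Finset

/-- Extremal solutions of the generalized bidding LP are mostly integral: every extreme
point of the feasible polytope has at most `|C|` fractional coordinates. -/
theorem bidding_lp_extreme_points_mostly_integral
    (m : ℕ) (C : Type*) [Fintype C]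
    (p : Fin m → ℝ) (B : C → ℝ) (w : C → Fin m → ℝ)
    (hp : ∀ j, 0 ≤ p j) (hB : ∀ c, 0 ≤ B c) (hw : ∀ c j, 0 ≤ w c j)
    (P : Set (Fin m → ℝ))
    (hP : P = {x | (∀ j, 0 ≤ x j ∧ x j ≤ 1) ∧
      ∀ c, ∑ j, p j * x j ≤ B c + ∑ j, w c j * x j})
    (x : Fin m → ℝ) (hx : x ∈ Set.extremePoints ℝ P) :
    (Finset.univ.filter fun j => 0 < x j ∧ x j < 1).card ≤ Fintype.card C := by
  by_contra hcard
  push_neg at hcard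
  set F := Finset.univ.filter (fun j => 0 < x j ∧ x j < 1) with hF
  -- the linear map sending a direction supported on F to its effect on each constraint
  let L : ({j // j ∈ F} → ℝ) →ₗ[ℝ] (C → ℝ) :=
    { toFun := fun d c => ∑ j, (p j.1 - w c j.1) * d j
      map_add' := by
        intro a b; funext c
        simp [mul_add, Finset.sum_add_distrib]
      map_smul' := by
        intro r a; funext c
        simp only [Pi.smul_apply, smul_eq_mul, RingHom.id_apply, Finset.mul_sum]
        congr 1; funext j; ring }
  have hnotinj : ¬ Function.Injective L := by
    intro hinj
    have h1 := LinearMap.finrank_le_finrank_of_injective hinj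
    rw [Module.finrank_pi, Module.finrank_pi, Fintype.card_coe] at h1
    omega
  rw [Function.not_injective_iff] at hnotinj
  obtain ⟨a, b, hab, hne⟩ := hnotinj
  set d : {j // j ∈ F} → ℝ := a - b with hd
  have hLd : L d = 0 := by rw [hd, map_sub, hab, sub_self]
  have hdne : d ≠ 0 := sub_ne_zero.mpr hne
  -- extend d by zero outside F
  set d' : Fin m → ℝ := fun j => if h : j ∈ F then d ⟨j, h⟩ else 0 with hd'
  have hd'F : ∀ j : {j // j ∈ F}, d' j.1 = d j := by
    intro j; simp [hd', j.2]
  have hd'0 : ∀ j, j ∉ F → d' j = 0 := by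
    intro j hj; simp [hd', hj]
  -- the direction preserves all constraints exactly
  have key : ∀ c, ∑ j, (p j - w c j) * d' j = 0 := by
    intro c
    have h0 : ∑ j, (p j - w c j) * d' j = ∑ j ∈ F, (p j - w c j) * d' j :=
      (Finset.sum_subset (Finset.subset_univ F)
        (fun j _ hj => by rw [hd'0 j hj, mul_zero])).symm
    have h1 : ∑ j ∈ F, (p j - w c j) * d' j = L d c := by
      rw [← Finset.sum_attach F (fun j => (p j - w c j) * d' j)]
      show _ = ∑ j : {j // j ∈ F}, (p j.1 - w c j.1) * d j
      rw [← Finset.univ_eq_attach]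
      exact Finset.sum_congr rfl (fun j _ => by rw [hd'F])
    rw [h0, h1, hLd]; rfl
  have key2 : ∀ c, ∑ j, p j * d' j = ∑ j, w c j * d' j := by
    intro c
    have h := key c
    have h2 : ∑ j, (p j - w c j) * d' j = ∑ j, p j * d' j - ∑ j, w c j * d' j := by
      rw [← Finset.sum_sub_distrib]
      exact Finset.sum_congr rfl (fun j _ => by ring)
    rw [h2] at h
    linarith
  -- choose a small ε
  have hFne : F.Nonempty := Finset.card_pos.mp (by omega)
  set δ : ℝ := F.inf' hFne (fun j => min (x j) (1 - x j)) with hδ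
  have hδpos : 0 < δ := by
    rw [hδ, Finset.lt_inf'_iff]
    intro j hj
    rw [hF, Finset.mem_filter] at hj
    exact lt_min hj.2.1 (by linarith [hj.2.2])
  have hδle : ∀ j ∈ F, δ ≤ min (x j) (1 - x j) := fun j hj => Finset.inf'_le _ hj
  set S : ℝ := ∑ j, |d' j| with hS
  have hS0 : 0 ≤ S := Finset.sum_nonneg (fun j _ => abs_nonneg _)
  set ε : ℝ := δ / (S + 1) with hε
  have hεpos : 0 < ε := div_pos hδpos (by linarith)
  have hεd : ∀ j, ε * |d' j| ≤ δ := by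
    intro j
    have h1 : |d' j| ≤ S :=
      Finset.single_le_sum (fun j _ => abs_nonneg (d' j)) (Finset.mem_univ j)
    have h2 : ε * (S + 1) = δ := by
      rw [hε]; field_simp
    nlinarith
  -- the two perturbed points
  have hxP : x ∈ P := hx.1
  rw [hP] at hxP
  obtain ⟨hbox, hcons⟩ := hxP
  have hpt : ∀ s : ℝ, s = 1 ∨ s = -1 → (fun j => x j + s * ε * d' j) ∈ P := by
    intro s hs
    rw [hP]
    constructor
    · intro j
      dsimp only
      by_cases hj : j ∈ F
      · have h1 := hεd j
        have h2 := hδle j hj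
        have h3 : |s * ε * d' j| ≤ δ := by
          rcases hs with h | h <;> rw [h] <;>
            simpa [abs_mul, abs_of_pos hεpos] using h1
        have h4 := abs_le.mp h3
        constructor
        · have := min_le_left (x j) (1 - x j); linarith [h4.1]
        · have := min_le_right (x j) (1 - x j); linarith [h4.2]
      · rw [hd'0 j hj]
        simpa using hbox j
    · intro c
      have e1 : ∑ j, p j * (x j + s * ε * d' j)
          = ∑ j, p j * x j + s * ε * ∑ j, p j * d' j := by
        rw [Finset.mul_sum, ← Finset.sum_add_distrib]
        exact Finset.sum_congr rfl (fun j _ => by ring)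
      have e2 : ∑ j, w c j * (x j + s * ε * d' j)
          = ∑ j, w c j * x j + s * ε * ∑ j, w c j * d' j := by
        rw [Finset.mul_sum, ← Finset.sum_add_distrib]
        exact Finset.sum_congr rfl (fun j _ => by ring)
      rw [e1, e2, ← key2 c]
      linarith [hcons c]
  have hx1 : (fun j => x j + (1 : ℝ) * ε * d' j) ∈ P := hpt 1 (Or.inl rfl)
  have hx2 : (fun j => x j + (-1 : ℝ) * ε * d' j) ∈ P := hpt (-1) (Or.inr rfl)
  have hmid : x ∈ openSegment ℝ (fun j => x j + (1 : ℝ) * ε * d' j)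
      (fun j => x j + (-1 : ℝ) * ε * d' j) := by
    refine ⟨1/2, 1/2, by norm_num, by norm_num, by norm_num, ?_⟩
    funext j
    simp only [Pi.add_apply, Pi.smul_apply, smul_eq_mul]
    ring
  have heq := hx.2 hx1 hx2 hmid
  -- conclude d = 0, contradiction
  obtain ⟨j₀, hj₀⟩ := Function.ne_iff.mp hdne
  have h5 : x j₀.1 + 1 * ε * d' j₀.1 = x j₀.1 := congrFun heq j₀.1
  rw [hd'F j₀] at h5
  have h6 : ε * d j₀ = 0 := by linarith
  rcases mul_eq_zero.mp h6 with h | h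
  · exact absurd h (ne_of_gt hεpos)
  · exact hj₀ (by simpa using h)
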